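/- Let γ ∈ L¹₊(0,∞) be supported in [0,a*] with a* < ∞ and γ(a) ≤ β̄e^{-μ̲a}, and let f be Lipschitz with constant L. Let {φ_n} be a bounded sequence in C₊([-a*,0]) and b_n the continuous solutions of b_n(t) = f(∫₀^{a*}γ(a)b_n(t-a)da) with history φ_n, which are uniformly bounded on [0,a*] by some constant K. Then the family {b_n|_{[0,a*]}} is equicontinuous; consequently, the time-a* solution map φ ↦ b^φ_{a*} takes bounded subsets of the state space into relatively compact subsets of C([-a*,0]). -/

import Mathlib

open MeasureTheory Real Set Filter intervalIntegral Topology BoundedContinuousFunction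

/-- L¹ continuity of translation, elementary version. -/
lemma l1_translation_aux {γ : ℝ → ℝ} (hint : Integrable γ) {ε : ℝ} (hε : 0 < ε) :
    ∃ δ > 0, ∀ h : ℝ, |h| < δ → (∫ x, |γ (x + h) - γ x|) < ε := by
  obtain ⟨g, gsupp, hgdist, gcont, gint⟩ :=
    hint.exists_hasCompactSupport_integral_sub_le (show (0:ℝ) < ε/4 by linarith)
  obtain ⟨r, hr⟩ := gsupp.isBounded.subset_closedBall 0
  set M : ℝ := max r 0 with hM
  have hM0 : 0 ≤ M := le_max_right _ _
  have hsupp : ∀ x : ℝ, M + 1 < |x| → g x = 0 := by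
    intro x hx
    by_contra hgx
    have : x ∈ tsupport g := subset_tsupport g (by simpa using hgx)
    have := hr this
    simp only [Metric.mem_closedBall, Real.dist_eq, sub_zero] at this
    have : |x| ≤ M := le_trans this (le_max_left _ _)
    linarith
  have gUC : UniformContinuous g := gsupp.uniformContinuous_of_continuous gcont
  set ε' : ℝ := ε / (8 * M + 16) with hε'
  have hε'pos : 0 < ε' := by
    apply div_pos hε; positivity
  obtain ⟨δ₀, hδ₀pos, hδ₀⟩ := Metric.uniformContinuous_iff.1 gUC ε' hε'pos
  refine ⟨min δ₀ 1, lt_min hδ₀pos one_pos, fun h hh => ?_⟩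
  have hh1 : |h| < 1 := lt_of_lt_of_le hh (min_le_right _ _)
  have hh0 : |h| < δ₀ := lt_of_lt_of_le hh (min_le_left _ _)
  -- integrable pieces
  have iA : Integrable (fun x => |γ (x + h) - g (x + h)|) := ((hint.sub gint).abs).comp_add_right h
  have iB : Integrable (fun x => |g (x + h) - g x|) := ((gint.comp_add_right h).sub gint).abs
  have iC : Integrable (fun x => |g x - γ x|) := (gint.sub hint).abs
  have iL : Integrable (fun x => |γ (x + h) - γ x|) := ((hint.comp_add_right h).sub hint).abs
  have iBC : Integrable (fun x => |g (x + h) - g x| + |g x - γ x|) := iB.add iC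
  have iABC : Integrable
      (fun x => |γ (x + h) - g (x + h)| + (|g (x + h) - g x| + |g x - γ x|)) := iA.add iBC
  have mono1 : (∫ x, |γ (x + h) - γ x|) ≤
      ∫ x, (|γ (x + h) - g (x + h)| + (|g (x + h) - g x| + |g x - γ x|)) := by
    apply integral_mono iL iABC
    intro x
    simp only []
    have : γ (x + h) - γ x =
        (γ (x + h) - g (x + h)) + ((g (x + h) - g x) + (g x - γ x)) := by ring
    rw [this]
    exact (abs_add_le _ _).trans (by gcongr; exact abs_add_le _ _)
  have split : (∫ x, (|γ (x + h) - g (x + h)| + (|g (x + h) - g x| + |g x - γ x|))) =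
      (∫ x, |γ (x + h) - g (x + h)|) + ((∫ x, |g (x + h) - g x|) + ∫ x, |g x - γ x|) := by
    rw [integral_add iA iBC, integral_add iB iC]
  have hA : (∫ x, |γ (x + h) - g (x + h)|) ≤ ε/4 := by
    have : (∫ x, |γ (x + h) - g (x + h)|) = ∫ x, |γ x - g x| :=
      integral_add_right_eq_self (fun x => |γ x - g x|) h
    rw [this]
    simpa [Real.norm_eq_abs] using hgdist
  have hC : (∫ x, |g x - γ x|) ≤ ε/4 := by
    have : (fun x => |g x - γ x|) = fun x => |γ x - g x| := by
      funext x; rw [abs_sub_comm]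
    rw [this]
    simpa [Real.norm_eq_abs] using hgdist
  have hB : (∫ x, |g (x + h) - g x|) ≤ ε/4 := by
    have hzero : ∀ x : ℝ, x ∉ Icc (-(M + 2)) (M + 2) → |g (x + h) - g x| = 0 := by
      intro x hx
      simp only [mem_Icc, not_and_or, not_le] at hx
      have hx' : M + 2 < |x| := by
        rcases hx with hx | hx
        · rw [abs_of_neg (by linarith : x < 0)]; linarith
        · exact lt_of_lt_of_le hx (le_abs_self x)
      have h1 : g x = 0 := hsupp x (by linarith)
      have h2 : g (x + h) = 0 := by
        apply hsupp
        have : |x| - |h| ≤ |x + h| := by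
          have := abs_sub_abs_le_abs_sub x (-h)
          simpa [sub_neg_eq_add] using this
        linarith
      simp [h1, h2]
    have e1 : (∫ x, |g (x + h) - g x|) = ∫ x in Icc (-(M+2)) (M+2), |g (x + h) - g x| :=
      (setIntegral_eq_integral_of_forall_compl_eq_zero hzero).symm
    rw [e1]
    have hbound : ∀ x ∈ Icc (-(M+2)) (M+2), ‖|g (x + h) - g x|‖ ≤ ε' := by
      intro x _
      rw [Real.norm_eq_abs, abs_abs]
      have := hδ₀ (a := x + h) (b := x) (by simpa [Real.dist_eq] using hh0)
      rw [Real.dist_eq] at this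
      exact le_of_lt (by simpa using this)
    have hfin : volume (Icc (-(M+2)) (M+2)) < ⊤ := by
      rw [Real.volume_Icc]; exact ENNReal.ofReal_lt_top
    calc (∫ x in Icc (-(M+2)) (M+2), |g (x + h) - g x|)
        ≤ ‖∫ x in Icc (-(M+2)) (M+2), |g (x + h) - g x|‖ := le_abs_self _
      _ ≤ ε' * (volume (Icc (-(M+2)) (M+2))).toReal :=
          norm_setIntegral_le_of_norm_le_const hfin hbound
      _ ≤ ε/4 := by
          rw [Real.volume_Icc, ENNReal.toReal_ofReal (by linarith)]
          rw [hε']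
          have hMne : (8 * M + 16 : ℝ) ≠ 0 := by positivity
          have : ε / (8 * M + 16) * ((M + 2) - -(M + 2)) = ε / 4 := by
            field_simp; ring
          rw [this]
  linarith [mono1, split.le, hA, hB, hC]

/-- equicontinuity of uniformly bounded solutions of the Volterra
equation, and relative compactness of the time-`a*` solution map. -/
theorem volterra_solutions_equicontinuous
    (astar : ℝ) (hastar : 0 < astar)
    (γ : ℝ → ℝ) (βbar μlow : ℝ) (hβbar : 0 < βbar) (hμlow : 0 < μlow)
    (hγmeas : Measurable γ) (hγpos : ∀ a, 0 ≤ γ a)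
    (hγint : IntegrableOn γ (Ioi (0:ℝ)))
    (hγsupp : ∀ a : ℝ, a ∉ Icc (0:ℝ) astar → γ a = 0)
    (hγbdd : ∀ a : ℝ, 0 ≤ a → γ a ≤ βbar * exp (-μlow * a))
    (f : ℝ → ℝ) (L : NNReal) (hLip : LipschitzWith L f)
    (b : ℕ → ℝ → ℝ) (hbcont : ∀ n, Continuous (b n))
    (K : ℝ)
    (hbbdd : ∀ n : ℕ, ∀ t ∈ Icc (-astar) astar, |b n t| ≤ K)
    (hbeq : ∀ n : ℕ, ∀ t : ℝ, 0 ≤ t →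
      b n t = f (∫ a in (0:ℝ)..astar, γ a * b n (t - a))) :
    EquicontinuousOn (fun n : ℕ => b n) (Icc (0:ℝ) astar) ∧
    ∃ (g : ℝ → ℝ) (φ : ℕ → ℕ), StrictMono φ ∧
      TendstoUniformlyOn (fun n => b (φ n)) g atTop (Icc (0:ℝ) astar) := by
  -- γ is integrable on all of ℝ
  have hγInt : Integrable γ := by
    have h2 : IntegrableOn γ (Icc 0 astar) := by
      rw [integrableOn_Icc_iff_integrableOn_Ioc]
      exact hγint.mono_set Ioc_subset_Ioi_self
    have heq : γ = (Icc (0:ℝ) astar).indicator γ := by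
      funext a
      by_cases ha : a ∈ Icc (0:ℝ) astar
      · rw [indicator_of_mem ha]
      · rw [indicator_of_notMem ha, hγsupp a ha]
    rw [heq]
    rwa [integrable_indicator_iff measurableSet_Icc]
  set K' : ℝ := max K 0 with hK'
  have hK'0 : 0 ≤ K' := le_max_right _ _
  set c : ℕ → ℝ → ℝ := fun n => (Icc (-astar) astar).indicator (b n) with hc
  have hcb : ∀ n u, |c n u| ≤ K' := by
    intro n u
    by_cases hu : u ∈ Icc (-astar) astar
    · rw [hc]; simp only [indicator_of_mem hu]
      exact (hbbdd n u hu).trans (le_max_left _ _)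
    · rw [hc]; simp only [indicator_of_notMem hu]; simpa using hK'0
  have hcmeas : ∀ n, AEStronglyMeasurable (c n) volume := fun n =>
    ((hbcont n).measurable.indicator measurableSet_Icc).aestronglyMeasurable
  have hγt : ∀ t : ℝ, Integrable (fun u => γ (t - u)) := fun t => hγInt.comp_sub_left t
  have hInt : ∀ n (t : ℝ), Integrable (fun u => c n u * γ (t - u)) := fun n t =>
    (hγt t).bdd_mul (c := K') (hcmeas n) (ae_of_all _ fun u => by simpa [Real.norm_eq_abs] using hcb n u)
  -- Claim A: rewriting the convolution integral
  have claimA : ∀ n, ∀ t ∈ Icc (0:ℝ) astar,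
      (∫ a in (0:ℝ)..astar, γ a * b n (t - a)) = ∫ u, c n u * γ (t - u) := by
    intro n t ht
    obtain ⟨ht0, ht1⟩ := ht
    set G : ℝ → ℝ := fun u => c n u * γ (t - u) with hG
    have e1 : (∫ a in (0:ℝ)..astar, γ a * b n (t - a))
        = ∫ a in (0:ℝ)..astar, G (t - a) := by
      apply intervalIntegral.integral_congr
      intro a ha
      rw [uIcc_of_le hastar.le] at ha
      obtain ⟨ha0, ha1⟩ := ha
      have hmem : t - a ∈ Icc (-astar) astar := ⟨by linarith, by linarith⟩
      rw [hG]
      simp only [hc, indicator_of_mem hmem]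
      have h3 : t - (t - a) = a := by ring
      rw [h3, mul_comm]
    rw [e1, intervalIntegral.integral_comp_sub_left G t]
    rw [intervalIntegral.integral_of_le (by linarith : t - astar ≤ t - 0)]
    rw [← MeasureTheory.integral_Icc_eq_integral_Ioc]
    apply setIntegral_eq_integral_of_forall_compl_eq_zero
    intro u hu
    simp only [mem_Icc, not_and_or, not_le] at hu
    have hγ0 : γ (t - u) = 0 := by
      apply hγsupp
      simp only [mem_Icc, not_and_or, not_le]
      rcases hu with hu | hu
      · right; linarith
      · left; linarith
    show c n u * γ (t - u) = 0
    rw [hγ0, mul_zero]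
  -- the key uniform estimate
  have key : ∀ ε > 0, ∃ δ > 0, ∀ (n : ℕ), ∀ t ∈ Icc (0:ℝ) astar, ∀ s ∈ Icc (0:ℝ) astar,
      |t - s| < δ → dist (b n t) (b n s) < ε := by
    intro ε hε
    set C : ℝ := (L : ℝ) * K' + 1 with hC
    have hLK0 : (0:ℝ) ≤ (L : ℝ) * K' := mul_nonneg L.2 hK'0
    have hC1 : (1:ℝ) ≤ C := by linarith
    have hCpos : (0:ℝ) < C := by linarith
    obtain ⟨δ, hδpos, hδ⟩ := l1_translation_aux hγInt (div_pos hε hCpos)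
    refine ⟨δ, hδpos, fun n t ht s hs hts => ?_⟩
    rw [hbeq n t ht.1, hbeq n s hs.1]
    refine lt_of_le_of_lt (hLip.dist_le_mul _ _) ?_
    rw [claimA n t ht, claimA n s hs]
    have T0 : (0:ℝ) ≤ ∫ x, |γ (x + (t - s)) - γ x| := integral_nonneg fun x => abs_nonneg _
    have Tlt : (∫ x, |γ (x + (t - s)) - γ x|) < ε / C := hδ (t - s) hts
    have step : dist (∫ u, c n u * γ (t - u)) (∫ u, c n u * γ (s - u))
        ≤ K' * ∫ x, |γ (x + (t - s)) - γ x| := by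
      rw [Real.dist_eq, ← integral_sub (hInt n t) (hInt n s)]
      calc |∫ u, (c n u * γ (t - u) - c n u * γ (s - u))|
          ≤ ∫ u, |c n u * γ (t - u) - c n u * γ (s - u)| := by
            simpa [Real.norm_eq_abs] using
              norm_integral_le_integral_norm (fun u => c n u * γ (t - u) - c n u * γ (s - u))
        _ ≤ ∫ u, K' * |γ (t - u) - γ (s - u)| := by
            apply integral_mono ((hInt n t).sub (hInt n s)).abs
              ((((hγt t).sub (hγt s)).abs).const_mul K')
            intro u
            simp only [Pi.sub_apply]
            have e2 : c n u * γ (t - u) - c n u * γ (s - u)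
                = c n u * (γ (t - u) - γ (s - u)) := by ring
            rw [e2, abs_mul]
            exact mul_le_mul_of_nonneg_right (hcb n u) (abs_nonneg _)
        _ = K' * ∫ u, |γ (t - u) - γ (s - u)| := MeasureTheory.integral_const_mul K' _
        _ = K' * ∫ x, |γ (x + (t - s)) - γ x| := by
            congr 1
            rw [← integral_sub_left_eq_self (fun u => |γ (t - u) - γ (s - u)|) volume s]
            congr 1
            funext x
            have h1 : t - (s - x) = x + (t - s) := by ring
            have h2 : s - (s - x) = x := by ring
            rw [h1, h2]
    have hLKC : (L:ℝ) * K' = C - 1 := by rw [hC]; ring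
    calc (L:ℝ) * dist (∫ u, c n u * γ (t - u)) (∫ u, c n u * γ (s - u))
        ≤ (L:ℝ) * (K' * ∫ x, |γ (x + (t - s)) - γ x|) :=
          mul_le_mul_of_nonneg_left step L.2
      _ = (C - 1) * ∫ x, |γ (x + (t - s)) - γ x| := by rw [← mul_assoc, hLKC]
      _ ≤ (C - 1) * (ε / C) := mul_le_mul_of_nonneg_left Tlt.le (by linarith)
      _ = ε - ε / C := by field_simp
      _ < ε := by have := div_pos hε hCpos; linarith
  -- Part 1: equicontinuity
  have part1 : EquicontinuousOn (fun n : ℕ => b n) (Icc (0:ℝ) astar) := by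
    intro x hx U hU
    obtain ⟨ε, hε, hεU⟩ := Metric.mem_uniformity_dist.1 hU
    obtain ⟨δ, hδpos, hδ⟩ := key ε hε
    have hball : Metric.ball x δ ∈ 𝓝[Icc (0:ℝ) astar] x :=
      nhdsWithin_le_nhds (Metric.ball_mem_nhds x hδpos)
    filter_upwards [hball, self_mem_nhdsWithin] with y hy hyS n
    apply hεU
    have hxy : |x - y| < δ := by rw [← Real.dist_eq]; exact Metric.mem_ball'.1 hy
    exact hδ n x hx y hyS hxy
  refine ⟨part1, ?_⟩
  -- Part 2: Arzelà–Ascoli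
  haveI : CompactSpace (Icc (0:ℝ) astar) := isCompact_iff_compactSpace.mp isCompact_Icc
  set F : ℕ → (Icc (0:ℝ) astar →ᵇ ℝ) := fun n =>
    BoundedContinuousFunction.mkOfCompact
      ⟨fun x => b n x.1, (hbcont n).comp continuous_subtype_val⟩ with hF
  have hFs : ∀ (f : Icc (0:ℝ) astar →ᵇ ℝ) (x : Icc (0:ℝ) astar),
      f ∈ range F → f x ∈ Icc (-K') K' := by
    rintro _ x ⟨n, rfl⟩
    have hx : (x:ℝ) ∈ Icc (-astar) astar := ⟨by linarith [x.2.1], x.2.2⟩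
    have h2 : |b n x.1| ≤ K' := (hbbdd n x hx).trans (le_max_left _ _)
    have h3 : (F n) x = b n x.1 := rfl
    rw [h3, mem_Icc]
    constructor
    · linarith [(abs_le.1 h2).1]
    · exact (abs_le.1 h2).2
  have hequi : Equicontinuous ((↑) : range F → Icc (0:ℝ) astar → ℝ) := by
    intro x₀
    rw [Metric.equicontinuousAt_iff]
    intro ε hε
    obtain ⟨δ, hδpos, hδ⟩ := key ε hε
    refine ⟨δ, hδpos, fun x hx i => ?_⟩
    obtain ⟨n, hn⟩ := i.2
    have hxdist : |(x₀:ℝ) - (x:ℝ)| < δ := by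
      rw [← Real.dist_eq]
      rw [Subtype.dist_eq] at hx
      rw [dist_comm] at hx
      exact hx
    have := hδ n x₀ x₀.2 x x.2 hxdist
    calc dist ((i : Icc (0:ℝ) astar → ℝ) x₀) ((i : Icc (0:ℝ) astar → ℝ) x)
        = dist (b n x₀) (b n x) := by rw [← hn]; rfl
      _ < ε := this
  have hcomp : IsCompact (closure (range F)) :=
    BoundedContinuousFunction.arzela_ascoli (Icc (-K') K') isCompact_Icc (range F) hFs hequi
  have hseq : IsSeqCompact (closure (range F)) := hcomp.isSeqCompact
  obtain ⟨h, hmem, φ, hφ, hconv⟩ :=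
    hseq (x := fun n => F n) fun n => subset_closure (mem_range_self n)
  refine ⟨fun x => if hx : x ∈ Icc (0:ℝ) astar then h ⟨x, hx⟩ else 0, φ, hφ, ?_⟩
  rw [tendstoUniformlyOn_iff_tendstoUniformly_comp_coe]
  have hgeq : ((fun x => if hx : x ∈ Icc (0:ℝ) astar then h ⟨x, hx⟩ else 0) ∘
      (Subtype.val : Icc (0:ℝ) astar → ℝ)) = (h : Icc (0:ℝ) astar → ℝ) := by
    funext x
    simp only [Function.comp_apply]
    rw [dif_pos x.2]
  rw [hgeq]
  have hTU : TendstoUniformly (fun n => (F (φ n) : Icc (0:ℝ) astar → ℝ))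
      (h : Icc (0:ℝ) astar → ℝ) atTop :=
    BoundedContinuousFunction.tendsto_iff_tendstoUniformly.1 hconv
  exact hTU
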